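/- Let C ⊂ ℝ² be a compact, symmetric (C = −C), strictly convex body with nonempty interior whose support function P(t) = sup_{x ∈ C} ⟨t,x⟩ is real-analytic on ℝ² ∖ {0}. Let 𝒵 denote the set of primitive vectors of ℤ² whose first nonzero coordinate is positive. For a pair p = (p₁,p₂) ∈ 𝒵 with p₁, p₂ ≥ 1 and m = (m¹, m²) ∈ 𝒵 × 𝒵, define Q_{p,m} : ℝ² × ℝ² → ℝ by Q_{p,m}(z₁, z₂) = P( p₁⟨m¹, z₁⟩ , p₂⟨m², z₂⟩ ). If (p^{(1)}, m^{(1)}), …, (p^{(K)}, m^{(K)}) are pairwise distinct such pairs and l₁, …, l_K are real numbers with Σ_{i=1}^{K} l_i · Q_{p^{(i)}, m^{(i)}} ≡ 0 identically on ℝ² × ℝ², then l₁ = ⋯ = l_K = 0. -/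

import Mathlib

open MeasureTheory

/-- Euclidean inner product on `ℝ²` (realized as `ℝ × ℝ`). -/
def euclInner (u v : ℝ × ℝ) : ℝ := u.1 * v.1 + u.2 * v.2

/-- A vector of `ℤ²` is in `𝒵` if it is primitive (coprime coordinates) and its first
nonzero coordinate is positive. -/
def IsPrimitivePos (m : ℤ × ℤ) : Prop :=
  IsCoprime m.1 m.2 ∧ (0 < m.1 ∨ (m.1 = 0 ∧ 0 < m.2))

/-- The function `Q_{p,m}(z₁,z₂) = P(p₁⟨m¹,z₁⟩, p₂⟨m²,z₂⟩)` associated to a support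
function `P`, a pair `p = (p₁,p₂)` and a pair of integer vectors `m = (m¹,m²)`. -/
noncomputable def Qfun (P : ℝ × ℝ → ℝ) (p : ℤ × ℤ) (m : (ℤ × ℤ) × (ℤ × ℤ))
    (z₁ z₂ : ℝ × ℝ) : ℝ :=
  P ((p.1 : ℝ) * euclInner ((m.1.1 : ℝ), (m.1.2 : ℝ)) z₁,
     (p.2 : ℝ) * euclInner ((m.2.1 : ℝ), (m.2.2 : ℝ)) z₂)

open Topology Filter

lemma aux_cross {a b c d : ℤ} (hab : IsCoprime a b) (hcd : IsCoprime c d)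
    (ha : 0 < a) (hc : 0 < c) (h : a * d = c * b) :
    a = c ∧ b = d := by
  have h1 : a ∣ c * b := ⟨d, h.symm⟩
  have h2 : c ∣ a * d := ⟨b, h⟩
  have hac : a ∣ c := hab.dvd_of_dvd_mul_right h1
  have hca : c ∣ a := hcd.dvd_of_dvd_mul_right h2
  have hac' : a = c := Int.dvd_antisymm ha.le hc.le hac hca
  refine ⟨hac', ?_⟩
  subst hac'
  have := mul_left_cancel₀ ha.ne' h
  omega

lemma prim_ne_zero {m : ℤ × ℤ} (hm : IsPrimitivePos m) : ¬(m.1 = 0 ∧ m.2 = 0) := by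
  rcases hm.2 with h | h <;> omega

lemma aux_det {m n : ℤ × ℤ} (hm : IsPrimitivePos m) (hn : IsPrimitivePos n)
    (hne : m ≠ n) : m.1 * n.2 - m.2 * n.1 ≠ 0 := by
  intro h
  have h' : m.1 * n.2 = m.2 * n.1 := by omega
  rcases hm.2 with hm1 | ⟨hm1, hm2⟩
  · rcases hn.2 with hn1 | ⟨hn1, hn2⟩
    · -- both positive first coordinates
      have d1 : n.1 ∣ m.1 * n.2 := by rw [h']; exact Dvd.intro_left _ rfl
      have d2 : m.1 ∣ n.1 * m.2 := by
        refine ⟨n.2, ?_⟩; rw [mul_comm] at h' ⊢; omega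
      have hnm : n.1 ∣ m.1 := hn.1.dvd_of_dvd_mul_right d1
      have hmn : m.1 ∣ n.1 := hm.1.dvd_of_dvd_mul_right d2
      have he : m.1 = n.1 := Int.dvd_antisymm hm1.le hn1.le hmn hnm
      have : n.2 = m.2 := by
        have := h'
        rw [he] at this
        have := mul_left_cancel₀ (by omega : n.1 ≠ 0) (by linarith : n.1 * n.2 = n.1 * m.2)
        omega
      exact hne (Prod.ext he (by omega))
    · -- n.1 = 0, n.2 > 0, coprime ⇒ n.2 = 1
      have : IsUnit n.2 := (isCoprime_zero_left.mp (by rw [← hn1]; exact hn.1))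
      have hn2' : n.2 = 1 := by
        rcases Int.isUnit_iff.mp this with h1 | h1 <;> omega
      rw [hn1, hn2'] at h'
      omega
  · have hm2' : m.2 = 1 := by
      have : IsUnit m.2 := (isCoprime_zero_left.mp (by rw [← hm1]; exact hm.1))
      rcases Int.isUnit_iff.mp this with h1 | h1 <;> omega
    rcases hn.2 with hn1 | ⟨hn1, hn2⟩
    · rw [hm1, hm2'] at h'
      omega
    · have hn2' : n.2 = 1 := by
        have : IsUnit n.2 := (isCoprime_zero_left.mp (by rw [← hn1]; exact hn.1))
        rcases Int.isUnit_iff.mp this with h1 | h1 <;> omega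
      exact hne (Prod.ext (by omega) (by omega))

lemma aux_indep {m n : ℤ × ℤ} (hm : IsPrimitivePos m) (hn : IsPrimitivePos n)
    (hne : m ≠ n) {s t : ℝ} (hs : s ≠ 0) (ht : t ≠ 0) :
    ¬(s * (m.1 : ℝ) = t * (n.1 : ℝ) ∧ s * (m.2 : ℝ) = t * (n.2 : ℝ)) := by
  rintro ⟨h1, h2⟩
  have hdet : ((m.1 : ℝ) * n.2 - m.2 * n.1) ≠ 0 := by
    have hz := aux_det hm hn hne
    have : ((m.1 * n.2 - m.2 * n.1 : ℤ) : ℝ) ≠ 0 := Int.cast_ne_zero.mpr hz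
    push_cast at this
    exact this
  apply hdet
  have : s * t * ((m.1 : ℝ) * n.2 - m.2 * n.1) = 0 := by
    linear_combination t * (n.2 : ℝ) * h1 - t * (n.1 : ℝ) * h2
  rcases mul_eq_zero.mp this with h | h
  · exact absurd h (mul_ne_zero hs ht)
  · exact h

lemma exists_generic {N : Type*} [Fintype N] (n : N → ℝ × ℝ) (hn : ∀ k, n k ≠ 0) :
    ∃ u : ℝ × ℝ, ∀ k, euclInner (n k) u ≠ 0 := by
  classical
  obtain ⟨x, hx⟩ := Infinite.exists_notMem_finset
    (Finset.image (fun k => if (n k).2 = 0 then (37 : ℝ) else -(n k).1 / (n k).2) Finset.univ)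
  refine ⟨(1, x), fun k => ?_⟩
  simp only [euclInner, mul_one]
  intro h
  by_cases h2 : (n k).2 = 0
  · have h1 : (n k).1 ≠ 0 := fun h1 => hn k (Prod.ext h1 h2)
    rw [h2] at h; simp at h; exact h1 h
  · apply hx
    rw [Finset.mem_image]
    refine ⟨k, Finset.mem_univ _, ?_⟩
    rw [if_neg h2]
    field_simp
    linarith



lemma geom_indep {ι : Type*} [DecidableEq ι] (ρ d : ι → ℝ) (S : Set ℕ) (hS : S.Infinite)
    (T : Finset ι) (hρ : ∀ i ∈ T, 0 < ρ i)
    (hinj : ∀ i ∈ T, ∀ j ∈ T, ρ i = ρ j → i = j)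
    (hrel : ∀ k ∈ S, ∑ i ∈ T, d i * ρ i ^ k = 0) :
    ∀ i ∈ T, d i = 0 := by
  classical
  induction T using Finset.strongInduction with
  | _ T ih =>
    rcases Finset.eq_empty_or_nonempty T with rfl | hTne
    · simp
    obtain ⟨i₀, hi₀T, hi₀max⟩ := Finset.exists_max_image T ρ hTne
    set T' := T.erase i₀ with hT'
    have hsub : T' ⊂ T := Finset.erase_ssubset hi₀T
    have hsplit : ∀ k, ∑ i ∈ T', d i * ρ i ^ k + d i₀ * ρ i₀ ^ k = ∑ i ∈ T, d i * ρ i ^ k :=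
      fun k => Finset.sum_erase_add T _ hi₀T
    have hρ0 : 0 < ρ i₀ := hρ i₀ hi₀T
    -- show d i₀ = 0
    have hd0 : d i₀ = 0 := by
      rcases Finset.eq_empty_or_nonempty T' with hT'e | hT'ne
      · obtain ⟨k, hk⟩ := hS.nonempty
        have := hrel k hk
        rw [← hsplit k, hT'e, Finset.sum_empty, zero_add] at this
        exact (mul_eq_zero.mp this).resolve_right (by positivity)
      · by_contra hd
        obtain ⟨j₀, hj₀, hj₀max⟩ := Finset.exists_max_image T' ρ hT'ne
        set q : ℝ := ρ j₀ / ρ i₀ with hq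
        have hj₀T : j₀ ∈ T := Finset.mem_of_mem_erase hj₀
        have hq1 : q < 1 := by
          rw [hq, div_lt_one hρ0]
          rcases lt_or_eq_of_le (hi₀max j₀ hj₀T) with h | h
          · exact h
          · exact absurd (hinj j₀ hj₀T i₀ hi₀T h) (Finset.ne_of_mem_erase hj₀)
        have hq0 : 0 < q := div_pos (hρ _ hj₀T) hρ0
        set M : ℝ := ∑ i ∈ T', |d i| with hM
        have hM0 : 0 ≤ M := Finset.sum_nonneg fun i _ => abs_nonneg _
        have key : ∀ k ∈ S, |d i₀| ≤ M * q ^ k := by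
          intro k hk
          have h1 : d i₀ * ρ i₀ ^ k = -∑ i ∈ T', d i * ρ i ^ k := by
            have := hrel k hk
            rw [← hsplit k] at this
            linarith
          have h2 : |d i₀| * ρ i₀ ^ k ≤ ∑ i ∈ T', |d i| * ρ i ^ k := by
            have : |d i₀ * ρ i₀ ^ k| ≤ ∑ i ∈ T', |d i * ρ i ^ k| := by
              rw [h1, abs_neg]
              exact Finset.abs_sum_le_sum_abs _ _
            rw [abs_mul, abs_pow, abs_of_pos hρ0] at this
            refine this.trans (Finset.sum_le_sum fun i hi => ?_)
            rw [abs_mul, abs_pow, abs_of_pos (hρ _ (Finset.mem_of_mem_erase hi))]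
          have h3 : ∑ i ∈ T', |d i| * ρ i ^ k ≤ M * (q * ρ i₀) ^ k := by
            rw [hM, Finset.sum_mul]
            refine Finset.sum_le_sum fun i hi => ?_
            refine mul_le_mul_of_nonneg_left ?_ (abs_nonneg _)
            refine pow_le_pow_left₀ (hρ _ (Finset.mem_of_mem_erase hi)).le ?_ k
            have : ρ i ≤ ρ j₀ := hj₀max i hi
            calc ρ i ≤ ρ j₀ := this
            _ = q * ρ i₀ := by rw [hq]; field_simp
          have h4 : |d i₀| * ρ i₀ ^ k ≤ M * q ^ k * ρ i₀ ^ k := by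
            rw [mul_pow] at h3
            calc |d i₀| * ρ i₀ ^ k ≤ M * (q ^ k * ρ i₀ ^ k) := h2.trans h3
            _ = M * q ^ k * ρ i₀ ^ k := by ring
          exact le_of_mul_le_mul_right h4 (by positivity)
        have hdpos : 0 < |d i₀| := abs_pos.mpr hd
        obtain ⟨k₀, hk₀⟩ := exists_pow_lt_of_lt_one (div_pos hdpos (by linarith : (0:ℝ) < M + 1)) hq1
        obtain ⟨k, hkS, hkk₀⟩ := hS.exists_gt k₀
        have hle : q ^ k ≤ q ^ k₀ := pow_le_pow_of_le_one hq0.le hq1.le hkk₀.le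
        have := key k hkS
        have hMq : M * q ^ k < |d i₀| := by
          calc M * q ^ k ≤ M * q ^ k₀ := mul_le_mul_of_nonneg_left hle hM0
          _ ≤ (M + 1) * q ^ k₀ := by nlinarith [pow_pos hq0 k₀]
          _ < (M + 1) * (|d i₀| / (M + 1)) := by
            refine mul_lt_mul_of_pos_left hk₀ (by linarith)
          _ = |d i₀| := by field_simp
        linarith
    -- now apply induction hypothesis
    have hrel' : ∀ k ∈ S, ∑ i ∈ T', d i * ρ i ^ k = 0 := by
      intro k hk
      have := hsplit k
      rw [hrel k hk, hd0] at this
      linarith [this]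
    have hind := ih T' hsub (fun i hi => hρ i (Finset.mem_of_mem_erase hi))
      (fun i hi j hj h => hinj i (Finset.mem_of_mem_erase hi) j (Finset.mem_of_mem_erase hj) h)
      hrel'
    intro i hi
    rcases eq_or_ne i i₀ with rfl | hne
    · exact hd0
    · exact hind i (Finset.mem_erase.mpr ⟨hne, hi⟩)



section support
variable {C : Set (ℝ × ℝ)} {P : ℝ × ℝ → ℝ}

lemma P_isGreatest (hcpt : IsCompact C) (hCne : C.Nonempty)
    (hP : ∀ t : ℝ × ℝ, P t = sSup ((fun x => euclInner t x) '' C)) (t : ℝ × ℝ) :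
    IsGreatest ((fun x => euclInner t x) '' C) (P t) := by
  have hcont : Continuous fun x : ℝ × ℝ => euclInner t x := by
    unfold euclInner; fun_prop
  have himg : IsCompact ((fun x => euclInner t x) '' C) := hcpt.image hcont
  constructor
  · rw [hP]; exact himg.sSup_mem (hCne.image _)
  · rw [hP]; exact fun y hy => le_csSup himg.bddAbove hy

lemma P_even (hcpt : IsCompact C) (hCne : C.Nonempty) (hsymm : C = -C)
    (hP : ∀ t : ℝ × ℝ, P t = sSup ((fun x => euclInner t x) '' C)) (a b : ℝ) :
    P (-a, -b) = P (a, b) := by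
  have hsymm' : ∀ x : ℝ × ℝ, x ∈ C → -x ∈ C := by
    intro x hx
    rw [hsymm] at hx
    exact Set.mem_neg.mp hx
  have hset : ((fun x => euclInner (-a, -b) x) '' C) = ((fun x => euclInner (a, b) x) '' C) := by
    ext y
    simp only [Set.mem_image]
    constructor
    · rintro ⟨x, hx, rfl⟩
      exact ⟨-x, hsymm' x hx, by simp only [euclInner, Prod.fst_neg, Prod.snd_neg]; ring⟩
    · rintro ⟨x, hx, rfl⟩
      exact ⟨-x, hsymm' x hx, by simp only [euclInner, Prod.fst_neg, Prod.snd_neg]; ring⟩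
  rw [hP, hP, hset]

lemma P_homog (hcpt : IsCompact C) (hCne : C.Nonempty)
    (hP : ∀ t : ℝ × ℝ, P t = sSup ((fun x => euclInner t x) '' C))
    {c : ℝ} (hc : 0 < c) (a b : ℝ) :
    P (c * a, c * b) = c * P (a, b) := by
  have hg := P_isGreatest hcpt hCne hP (a, b)
  have hg2 := P_isGreatest hcpt hCne hP (c * a, c * b)
  refine hg2.unique ?_
  constructor
  · obtain ⟨x₀, hx₀, hval⟩ := hg.1
    refine ⟨x₀, hx₀, ?_⟩
    simp only [euclInner] at hval ⊢
    rw [← hval]; ring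
  · rintro y ⟨x, hx, rfl⟩
    have hle : euclInner (a, b) x ≤ P (a, b) := hg.2 ⟨x, hx, rfl⟩
    simp only [euclInner] at hle ⊢
    nlinarith
end support



lemma ball_in_C {C : Set (ℝ × ℝ)} (hconv : StrictConvex ℝ C) (hsymm : C = -C)
    (hint : (interior C).Nonempty) :
    ∃ ε : ℝ, 0 < ε ∧ ∀ w : ℝ × ℝ, ‖w‖ < ε → w ∈ C := by
  obtain ⟨z, hz⟩ := hint
  have hzneg : -z ∈ interior C := by
    have hopen : IsOpen (-(interior C)) := isOpen_interior.neg
    have hsub : -(interior C) ⊆ C := by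
      intro w hw
      have : -w ∈ interior C := Set.mem_neg.mp hw
      have : -w ∈ C := interior_subset this
      rw [hsymm]
      exact Set.mem_neg.mpr this
    have : -z ∈ -(interior C) := Set.mem_neg.mpr (by simpa using hz)
    exact interior_maximal hsub hopen this
  have hco : Convex ℝ (interior C) := hconv.convex.interior
  have h0 : (0 : ℝ × ℝ) ∈ interior C := by
    have := hco hz hzneg (by norm_num : (0:ℝ) ≤ (1/2:ℝ)) (by norm_num : (0:ℝ) ≤ (1/2:ℝ))
      (by norm_num)
    simpa using this
  rw [mem_interior_iff_mem_nhds, Metric.mem_nhds_iff] at h0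
  obtain ⟨ε, hε, hball⟩ := h0
  exact ⟨ε, hε, fun w hw => hball (by simpa [Metric.mem_ball] using hw)⟩


open Topology Filter

lemma psi_derivs_infinite (ψ φ : ℝ → ℝ)
    (hψa : ∀ y : ℝ, AnalyticAt ℝ ψ y)
    (hφa : ∀ x : ℝ, AnalyticAt ℝ φ x)
    (hψeven : ∀ y, ψ (-y) = ψ y)
    (hφψ : ∀ x : ℝ, 0 < x → φ x = x * ψ (1/x))
    (hφ0 : 0 < φ 0) :
    {k : ℕ | iteratedDeriv k ψ 0 ≠ 0}.Infinite := by
  classical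
  by_contra hfin
  rw [Set.not_infinite] at hfin
  obtain ⟨N₀, hN₀⟩ := hfin.bddAbove
  set N := N₀ + 1 with hN
  have hNpos : 0 < N := Nat.succ_pos _
  have hvanish : ∀ k, N ≤ k → iteratedDeriv k ψ 0 = 0 := by
    intro k hk
    by_contra hne
    have : k ≤ N₀ := hN₀ hne
    omega
  obtain ⟨pp, hpp⟩ := hψa 0
  obtain ⟨r, hball⟩ := hpp
  have hcoeff : ∀ k : ℕ, (Nat.factorial k : ℝ) * pp.coeff k = iteratedDeriv k ψ 0 := by
    intro k
    have h1 := hball.factorial_smul (1 : ℝ) k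
    rw [iteratedDeriv_eq_iteratedFDeriv]
    rw [← h1]
    have h2 : (pp k fun _ => (1:ℝ)) = pp.coeff k := by
      rw [FormalMultilinearSeries.apply_eq_pow_smul_coeff, one_pow, one_smul]
    rw [h2, nsmul_eq_mul]
  have hcz : ∀ k, N ≤ k → pp.coeff k = 0 := by
    intro k hk
    have := hcoeff k
    rw [hvanish k hk] at this
    have hfac : (Nat.factorial k : ℝ) ≠ 0 := Nat.cast_ne_zero.mpr k.factorial_ne_zero
    exact (mul_eq_zero.mp this).resolve_left hfac
  -- ψ equals a polynomial near 0
  have hev : ψ =ᶠ[𝓝 (0:ℝ)] fun z => ∑ n ∈ Finset.range N, pp.coeff n * z ^ n := by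
    have h3 := (hasFPowerSeriesAt_iff.mp ⟨r, hball⟩)
    filter_upwards [h3] with z hz
    have hz0 : ∀ n ∉ Finset.range N, z ^ n • pp.coeff n = 0 := by
      intro n hn
      rw [Finset.mem_range, not_lt] at hn
      rw [hcz n hn, smul_zero]
    have hsum : HasSum _ _ := hasSum_sum_of_ne_finset_zero hz0
    have := hz.unique hsum
    rw [zero_add] at this
    rw [this]
    exact Finset.sum_congr rfl fun n _ => by rw [smul_eq_mul]; ring
  set q : ℝ → ℝ := fun z => ∑ n ∈ Finset.range N, pp.coeff n * z ^ n with hqdef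
  have hqa : ∀ x : ℝ, AnalyticAt ℝ q x := by
    intro x
    apply Finset.analyticAt_fun_sum
    intro n _
    exact analyticAt_const.mul (analyticAt_id.pow n)
  have hψq : ∀ x : ℝ, ψ x = q x := by
    have := AnalyticOnNhd.eqOn_of_preconnected_of_eventuallyEq
      (fun x _ => hψa x) (fun x _ => hqa x) isPreconnected_univ (Set.mem_univ (0:ℝ)) hev
    exact fun x => this (Set.mem_univ x)
  -- coefficient 1 vanishes by evenness
  have hb1 : pp.coeff 1 = 0 := by
    have hder : deriv ψ 0 = 0 := by
      have hfun : ψ = fun y => ψ (-y) := funext fun y => (hψeven y).symm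
      have : deriv ψ 0 = deriv (fun y => ψ (-y)) 0 := by rw [← hfun]
      rw [deriv_comp_neg, neg_zero] at this
      linarith
    have := hcoeff 1
    rw [iteratedDeriv_one, hder] at this
    simpa using this
  -- φ as Laurent-type sum on (0,∞)
  have hφsum : ∀ x : ℝ, 0 < x →
      φ x = ∑ n ∈ Finset.range N, pp.coeff n * x * (1/x) ^ n := by
    intro x hx
    rw [hφψ x hx, hψq (1/x), hqdef]
    rw [Finset.mul_sum]
    exact Finset.sum_congr rfl fun n _ => by ring
  -- all coefficients with index ≥ 2 vanish
  have hge2 : ∀ n, 2 ≤ n → pp.coeff n = 0 := by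
    intro n hn2
    by_cases hnN : n < N
    swap
    · exact hcz n (by omega)
    by_contra hne
    -- take the maximal bad index
    set T := (Finset.range N).filter (fun k => 2 ≤ k ∧ pp.coeff k ≠ 0) with hT
    have hTne : T.Nonempty := ⟨n, by simp [hT, Finset.mem_filter, Finset.mem_range]; exact ⟨hnN, hn2, hne⟩⟩
    set M := T.max' hTne with hM
    have hMT : M ∈ T := T.max'_mem hTne
    rw [hT, Finset.mem_filter, Finset.mem_range] at hMT
    obtain ⟨hMN, hM2, hMne⟩ := hMT
    set g : ℝ → ℝ := fun x => ∑ k ∈ Finset.range (M+1), pp.coeff k * x ^ (M - k) with hg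
    have key : ∀ x : ℝ, 0 < x → x ^ (M-1) * φ x = g x := by
      intro x hx
      have hx0 : x ≠ 0 := ne_of_gt hx
      rw [hφsum x hx, Finset.mul_sum, hg]
      rw [← Finset.sum_subset (Finset.range_subset_range.mpr (by omega : M + 1 ≤ N))]
      · exact Finset.sum_congr rfl fun k hk => by
          rw [Finset.mem_range] at hk
          have hkM : k ≤ M := by omega
          have : x ^ (M-1) * (pp.coeff k * x * (1/x)^k) = pp.coeff k * (x ^ (M-1) * x * (1/x)^k) := by ring
          rw [this]
          congr 1
          rw [← pow_succ]
          have hsucc : M - 1 + 1 = M := by omega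
          rw [hsucc, one_div, inv_pow, ← pow_sub₀ x hx0 hkM]
      · intro k hk hkn
        rw [Finset.mem_range] at hk
        rw [Finset.mem_range, not_lt] at hkn
        have hck : pp.coeff k = 0 := by
          by_contra hck
          have : k ∈ T := by
            rw [hT, Finset.mem_filter, Finset.mem_range]
            exact ⟨hk, by omega, hck⟩
          have := T.le_max' k this
          omega
        rw [hck]
        ring
    -- limit of x^(M-1) * φ x as x → 0⁺ is 0
    have hA : Tendsto (fun x : ℝ => x ^ (M-1) * φ x) (𝓝[>] (0:ℝ)) (𝓝 0) := by
      have hc : ContinuousAt (fun x : ℝ => x ^ (M-1) * φ x) 0 :=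
        (continuousAt_pow _ _).mul (hφa 0).continuousAt
      have := hc.tendsto
      rw [zero_pow (by omega : M - 1 ≠ 0), zero_mul] at this
      exact this.mono_left nhdsWithin_le_nhds
    -- but it also tends to g 0 = coeff M
    have hB : Tendsto (fun x : ℝ => x ^ (M-1) * φ x) (𝓝[>] (0:ℝ)) (𝓝 (g 0)) := by
      have hgc : ContinuousAt g 0 := by
        apply Continuous.continuousAt
        apply continuous_finset_sum
        intro k _
        exact continuous_const.mul (continuous_pow _)
      have h1 : Tendsto g (𝓝[>] (0:ℝ)) (𝓝 (g 0)) := hgc.tendsto.mono_left nhdsWithin_le_nhds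
      refine h1.congr' ?_
      filter_upwards [eventually_mem_nhdsWithin] with x hx
      exact (key x hx).symm
    have hg0 : g 0 = pp.coeff M := by
      show (∑ k ∈ Finset.range (M+1), pp.coeff k * (0:ℝ) ^ (M - k)) = pp.coeff M
      rw [Finset.sum_eq_single M]
      · simp
      · intro k hk hkM
        rw [Finset.mem_range] at hk
        have : M - k ≠ 0 := by omega
        rw [zero_pow this, mul_zero]
      · intro h
        exact absurd (Finset.self_mem_range_succ M) h
    rw [hg0] at hB
    exact hMne (tendsto_nhds_unique hB hA)
  -- now φ x = coeff 0 * x on (0,∞)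
  have hφlin : ∀ x : ℝ, 0 < x → φ x = pp.coeff 0 * x := by
    intro x hx
    rw [hφsum x hx]
    rw [Finset.sum_eq_single 0]
    · simp
    · intro k hk hk0
      rcases Nat.lt_or_ge k 2 with h2 | h2
      · interval_cases k
        · exact absurd rfl hk0
        · rw [hb1]; ring
      · rw [hge2 k h2]; ring
    · intro h
      exact absurd (Finset.mem_range.mpr hNpos) h
  -- contradiction with φ 0 > 0
  have hA : Tendsto φ (𝓝[>] (0:ℝ)) (𝓝 (φ 0)) :=
    ((hφa 0).continuousAt.tendsto).mono_left nhdsWithin_le_nhds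
  have hB : Tendsto φ (𝓝[>] (0:ℝ)) (𝓝 0) := by
    have h1 : Tendsto (fun x : ℝ => pp.coeff 0 * x) (𝓝[>] (0:ℝ)) (𝓝 0) := by
      have hc : Continuous (fun x : ℝ => pp.coeff 0 * x) := continuous_const.mul continuous_id
      have := hc.tendsto (0:ℝ)
      rw [mul_zero] at this
      exact this.mono_left nhdsWithin_le_nhds
    refine h1.congr' ?_
    filter_upwards [eventually_mem_nhdsWithin] with x hx
    exact (hφlin x hx).symm
  have := tendsto_nhds_unique hA hB
  linarith


lemma iteratedDeriv_zero_fun {k : ℕ} {x : ℝ} : iteratedDeriv k (fun _ : ℝ => (0:ℝ)) x = 0 := by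
  induction k generalizing x with
  | zero => simp [iteratedDeriv_zero]
  | succ k ih =>
    rw [iteratedDeriv_succ]
    have : iteratedDeriv k (fun _ : ℝ => (0:ℝ)) = fun _ => (0:ℝ) := funext fun y => ih
    rw [this]
    simp

lemma iteratedDeriv_add' {k : ℕ} {f g : ℝ → ℝ} (hf : ContDiff ℝ k f) (hg : ContDiff ℝ k g)
    (x : ℝ) :
    iteratedDeriv k (fun y => f y + g y) x = iteratedDeriv k f x + iteratedDeriv k g x := by
  have := iteratedDerivWithin_add (Set.mem_univ x) uniqueDiffOn_univ
    hf.contDiffWithinAt hg.contDiffWithinAt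
  simpa [iteratedDerivWithin_univ, Pi.add_def] using this

lemma iteratedDeriv_finset_sum {ι : Type*} {k : ℕ} (s : Finset ι) {f : ι → ℝ → ℝ}
    (hf : ∀ i, ContDiff ℝ k (f i)) (x : ℝ) :
    iteratedDeriv k (fun y => ∑ i ∈ s, f i y) x = ∑ i ∈ s, iteratedDeriv k (f i) x := by
  classical
  induction s using Finset.induction with
  | empty => simpa using iteratedDeriv_zero_fun (k := k) (x := x)
  | insert _ _ hnotmem ih =>
    rename_i a s'
    rw [Finset.sum_insert hnotmem]
    have : (fun y => ∑ i ∈ insert a s', f i y) = fun y => f a y + ∑ i ∈ s', f i y := by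
      funext y; rw [Finset.sum_insert hnotmem]
    rw [this, iteratedDeriv_add' (hf a) (ContDiff.sum fun i _ => hf i), ih]


lemma dilates_indep (ψ : ℝ → ℝ) (hψa : ∀ y : ℝ, AnalyticAt ℝ ψ y)
    (hinf : {k : ℕ | iteratedDeriv k ψ 0 ≠ 0}.Infinite)
    {K : ℕ} (ρ dd : Fin K → ℝ) (hρ : ∀ i, 0 < ρ i) (hinj : Function.Injective ρ)
    (hrel : ∀ y : ℝ, 0 < y → ∑ i, dd i * ψ (ρ i * y) = 0) :
    ∀ i, dd i = 0 := by
  classical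
  set Y : ℝ → ℝ := fun y => ∑ i, dd i * ψ (ρ i * y) with hY
  have hψC : ∀ {k : ℕ}, ContDiff ℝ k ψ := fun {k} =>
    AnalyticOnNhd.contDiff (fun x _ => hψa x)
  have hterma : ∀ (i : Fin K) (y : ℝ), AnalyticAt ℝ (fun y => dd i * ψ (ρ i * y)) y := by
    intro i y
    exact analyticAt_const.mul ((hψa _).comp (analyticAt_const.mul analyticAt_id))
  have hYa : ∀ y : ℝ, AnalyticAt ℝ Y y := by
    intro y
    exact Finset.analyticAt_fun_sum _ fun i _ => hterma i y
  -- Y vanishes identically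
  have hYzero : ∀ y : ℝ, Y y = 0 := by
    have hev : Y =ᶠ[𝓝 (1:ℝ)] (fun _ => 0) := by
      filter_upwards [isOpen_Ioi.mem_nhds (by norm_num : (1:ℝ) ∈ Set.Ioi (0:ℝ))] with y hy
      exact hrel y hy
    have := AnalyticOnNhd.eqOn_of_preconnected_of_eventuallyEq
      (fun x _ => hYa x) (fun x _ => analyticAt_const) isPreconnected_univ
      (Set.mem_univ (1:ℝ)) hev
    exact fun y => this (Set.mem_univ y)
  -- compute iterated derivatives of Y at 0
  have hYd : ∀ k : ℕ, iteratedDeriv k Y 0 =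
      (∑ i, dd i * ρ i ^ k) * iteratedDeriv k ψ 0 := by
    intro k
    have hterm : ∀ i : Fin K, ContDiff ℝ k (fun y => dd i * ψ (ρ i * y)) :=
      fun i => contDiff_const.mul (hψC.comp (contDiff_const.mul contDiff_id))
    rw [hY]
    rw [iteratedDeriv_finset_sum Finset.univ hterm]
    rw [Finset.sum_mul]
    congr 1
    funext i
    have hcomp : ContDiff ℝ k (fun y : ℝ => ψ (ρ i * y)) :=
      hψC.comp (contDiff_const.mul contDiff_id)
    have h1 : iteratedDeriv k (fun y => dd i * ψ (ρ i * y)) 0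
        = dd i * iteratedDeriv k (fun y => ψ (ρ i * y)) 0 := by
      have := iteratedDerivWithin_const_mul (f := fun y : ℝ => ψ (ρ i * y))
        (Set.mem_univ (0:ℝ)) uniqueDiffOn_univ (dd i) hcomp.contDiffWithinAt
      simpa [iteratedDerivWithin_univ] using this
    have h2 : iteratedDeriv k (fun y => ψ (ρ i * y)) 0 = ρ i ^ k * iteratedDeriv k ψ 0 := by
      have := iteratedDeriv_comp_const_mul (hψC (k := k)) (ρ i)
      have h3 := congrFun this 0
      rw [h3, mul_zero]
    rw [h1, h2]
    ring
  have hrelk : ∀ k ∈ {k : ℕ | iteratedDeriv k ψ 0 ≠ 0}, ∑ i, dd i * ρ i ^ k = 0 := by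
    intro k hk
    have h0 : iteratedDeriv k Y 0 = 0 := by
      have : Y = fun _ => (0:ℝ) := funext hYzero
      rw [this]
      exact iteratedDeriv_zero_fun
    rw [hYd k] at h0
    exact (mul_eq_zero.mp h0).resolve_right hk
  have := geom_indep ρ dd _ hinf Finset.univ (fun i _ => hρ i)
    (fun i _ j _ h => hinj h) hrelk
  exact fun i => this i (Finset.mem_univ i)


def uvec (w : ℤ × ℤ) : ℝ × ℝ := ((w.1 : ℝ), (w.2 : ℝ))

lemma uvec_ne_zero {w : ℤ × ℤ} (hw : ¬(w.1 = 0 ∧ w.2 = 0)) : uvec w ≠ 0 := by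
  intro h
  rw [Prod.ext_iff] at h
  simp only [uvec, Prod.fst_zero, Prod.snd_zero, Int.cast_eq_zero] at h
  exact hw h

lemma exists_uv {K : ℕ} (p : Fin K → ℤ × ℤ) (m : Fin K → (ℤ × ℤ) × (ℤ × ℤ))
    (hp : ∀ i, IsPrimitivePos (p i) ∧ 1 ≤ (p i).1 ∧ 1 ≤ (p i).2)
    (hm : ∀ i, IsPrimitivePos (m i).1 ∧ IsPrimitivePos (m i).2)
    (hdist : Function.Injective (fun i => (p i, m i))) :
    ∃ u v : ℝ × ℝ,
      (∀ i, euclInner (uvec (m i).1) u ≠ 0) ∧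
      (∀ i, euclInner (uvec (m i).2) v ≠ 0) ∧
      (∀ i j : Fin K, i ≠ j → ∀ σ : ℝ, (σ = 1 ∨ σ = -1) →
        (((p i).1 : ℝ) * euclInner (uvec (m i).1) u) *
          (((p j).2 : ℝ) * euclInner (uvec (m j).2) v) ≠
        σ * ((((p j).1 : ℝ) * euclInner (uvec (m j).1) u) *
          (((p i).2 : ℝ) * euclInner (uvec (m i).2) v))) := by
  classical
  -- the sign attached to a boolean
  let sg : Bool → ℝ := fun ε => if ε then 1 else -1
  have hsg : ∀ ε, sg ε ≠ 0 := by intro ε; cases ε <;> norm_num [sg]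
  have hpZ : ∀ i : Fin K, (0:ℤ) < (p i).1 ∧ (0:ℤ) < (p i).2 := fun i =>
    ⟨lt_of_lt_of_le zero_lt_one (hp i).2.1, lt_of_lt_of_le zero_lt_one (hp i).2.2⟩
  have hppos : ∀ i : Fin K, (0:ℝ) < ((p i).1 : ℝ) ∧ (0:ℝ) < ((p i).2 : ℝ) := by
    intro i
    constructor
    · exact_mod_cast (hpZ i).1
    · exact_mod_cast (hpZ i).2
  -- family of linear conditions for u
  let gu : Fin K × Fin K × Bool → ℝ × ℝ := fun t =>
    if t.1 ≠ t.2.1 ∧ (m t.1).2 = (m t.2.1).2 then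
      ((((p t.1).1 : ℝ) * ((p t.2.1).2 : ℝ)) * ((m t.1).1.1 : ℝ)
          - sg t.2.2 * ((((p t.2.1).1 : ℝ) * ((p t.1).2 : ℝ))) * ((m t.2.1).1.1 : ℝ),
        (((p t.1).1 : ℝ) * ((p t.2.1).2 : ℝ)) * ((m t.1).1.2 : ℝ)
          - sg t.2.2 * ((((p t.2.1).1 : ℝ) * ((p t.1).2 : ℝ))) * ((m t.2.1).1.2 : ℝ))
    else (1, 0)
  let nu : (Fin K ⊕ (Fin K × Fin K × Bool)) → ℝ × ℝ :=
    Sum.elim (fun i => uvec (m i).1) gu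
  have hnu : ∀ k, nu k ≠ 0 := by
    rintro (i | ⟨i, j, ε⟩)
    · exact uvec_ne_zero (prim_ne_zero (hm i).1)
    · simp only [nu, Sum.elim_inr, gu]
      split_ifs with hcond
      · obtain ⟨hij, hm2⟩ := hcond
        intro h0
        rw [Prod.ext_iff] at h0
        simp only [Prod.fst_zero, Prod.snd_zero] at h0
        have h1 : (((p i).1 : ℝ) * ((p j).2 : ℝ)) * ((m i).1.1 : ℝ)
            = (sg ε * (((p j).1 : ℝ) * ((p i).2 : ℝ))) * ((m j).1.1 : ℝ) := by
          have := h0.1; ring_nf at this ⊢; linarith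
        have h2 : (((p i).1 : ℝ) * ((p j).2 : ℝ)) * ((m i).1.2 : ℝ)
            = (sg ε * (((p j).1 : ℝ) * ((p i).2 : ℝ))) * ((m j).1.2 : ℝ) := by
          have := h0.2; ring_nf at this ⊢; linarith
        have hc1 : (((p i).1 : ℝ) * ((p j).2 : ℝ)) ≠ 0 :=
          ne_of_gt (mul_pos (hppos i).1 (hppos j).2)
        have hc2 : sg ε * (((p j).1 : ℝ) * ((p i).2 : ℝ)) ≠ 0 :=
          mul_ne_zero (hsg ε) (ne_of_gt (mul_pos (hppos j).1 (hppos i).2))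
        by_cases hm1 : (m i).1 = (m j).1
        · -- then m i = m j, so p i ≠ p j
          have hmm : m i = m j := Prod.ext hm1 hm2
          have hpne : p i ≠ p j := by
            intro hpp
            exact hij (hdist (by simp only [hpp, hmm]))
          -- from components: c1 = σ c2
          have hmnz := prim_ne_zero (hm i).1
          have hcc : (((p i).1 : ℝ) * ((p j).2 : ℝ)) = sg ε * (((p j).1 : ℝ) * ((p i).2 : ℝ)) := by
            rw [hm1] at h1 h2
            by_cases hz1 : ((m j).1.1 : ℝ) = 0
            · have hz2 : ((m j).1.2 : ℝ) ≠ 0 := by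
                rw [hm1] at hmnz
                intro hz2
                exact hmnz ⟨by exact_mod_cast hz1, by exact_mod_cast hz2⟩
              exact mul_right_cancel₀ hz2 h2
            · exact mul_right_cancel₀ hz1 h1
          cases ε
          · -- σ = -1 : positive = negative, contradiction
            simp only [sg, if_neg Bool.false_ne_true] at hcc
            nlinarith [(hppos i).1, (hppos i).2, (hppos j).1, (hppos j).2]
          · -- σ = 1 : cross-product equality ⇒ p i = p j
            simp only [sg, if_pos rfl] at hcc
            rw [one_mul] at hcc
            have hZ : ((p i).1 : ℝ) * ((p j).2 : ℝ) = ((p j).1 : ℝ) * ((p i).2 : ℝ) := hcc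
            have hZ' : (p i).1 * (p j).2 = (p j).1 * (p i).2 := by exact_mod_cast hZ
            obtain ⟨e1, e2⟩ := aux_cross (hp i).1.1 (hp j).1.1 (hpZ i).1 (hpZ j).1 hZ'
            exact hpne (Prod.ext e1 e2)
        · exact aux_indep (hm i).1 (hm j).1 hm1 hc1 hc2 ⟨h1, h2⟩
      · intro h0
        rw [Prod.ext_iff] at h0
        simp at h0
  obtain ⟨u, hu⟩ := exists_generic nu hnu
  have heu : ∀ i, euclInner (uvec (m i).1) u ≠ 0 := fun i => hu (Sum.inl i)
  -- the u-condition in usable form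
  have hucond : ∀ (i j : Fin K) (ε : Bool), i ≠ j → (m i).2 = (m j).2 →
      (((p i).1 : ℝ) * ((p j).2 : ℝ)) * euclInner (uvec (m i).1) u ≠
        sg ε * ((((p j).1 : ℝ) * ((p i).2 : ℝ)) * euclInner (uvec (m j).1) u) := by
    intro i j ε hij hm2 heq
    apply hu (Sum.inr (i, j, ε))
    have hval : euclInner (nu (Sum.inr (i, j, ε))) u =
        (((p i).1 : ℝ) * ((p j).2 : ℝ)) * euclInner (uvec (m i).1) u
          - sg ε * ((((p j).1 : ℝ) * ((p i).2 : ℝ)) * euclInner (uvec (m j).1) u) := by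
      simp only [nu, Sum.elim_inr, gu, if_pos (⟨hij, hm2⟩ : i ≠ j ∧ (m i).2 = (m j).2)]
      simp only [euclInner, uvec]
      ring
    rw [hval, heq]
    ring
  -- family of linear conditions for v
  let gv : Fin K × Fin K × Bool → ℝ × ℝ := fun t =>
    if t.1 ≠ t.2.1 then
      (((((p t.1).1 : ℝ) * ((p t.2.1).2 : ℝ)) * euclInner (uvec (m t.1).1) u) * ((m t.2.1).2.1 : ℝ)
        - sg t.2.2 * (((((p t.2.1).1 : ℝ) * ((p t.1).2 : ℝ)) * euclInner (uvec (m t.2.1).1) u))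
            * ((m t.1).2.1 : ℝ),
       ((((p t.1).1 : ℝ) * ((p t.2.1).2 : ℝ)) * euclInner (uvec (m t.1).1) u) * ((m t.2.1).2.2 : ℝ)
        - sg t.2.2 * (((((p t.2.1).1 : ℝ) * ((p t.1).2 : ℝ)) * euclInner (uvec (m t.2.1).1) u))
            * ((m t.1).2.2 : ℝ))
    else (1, 0)
  let nv : (Fin K ⊕ (Fin K × Fin K × Bool)) → ℝ × ℝ :=
    Sum.elim (fun i => uvec (m i).2) gv
  have hnv : ∀ k, nv k ≠ 0 := by
    rintro (i | ⟨i, j, ε⟩)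
    · exact uvec_ne_zero (prim_ne_zero (hm i).2)
    · simp only [nv, Sum.elim_inr, gv]
      split_ifs with hij
      · intro h0
        rw [Prod.ext_iff] at h0
        simp only [Prod.fst_zero, Prod.snd_zero] at h0
        set A1 : ℝ := (((p i).1 : ℝ) * ((p j).2 : ℝ)) * euclInner (uvec (m i).1) u with hA1
        set A2 : ℝ := (((p j).1 : ℝ) * ((p i).2 : ℝ)) * euclInner (uvec (m j).1) u with hA2
        have hA1ne : A1 ≠ 0 :=
          mul_ne_zero (ne_of_gt (mul_pos (hppos i).1 (hppos j).2)) (heu i)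
        have hA2ne : sg ε * A2 ≠ 0 :=
          mul_ne_zero (hsg ε)
            (mul_ne_zero (ne_of_gt (mul_pos (hppos j).1 (hppos i).2)) (heu j))
        have h1 : A1 * ((m j).2.1 : ℝ) = (sg ε * A2) * ((m i).2.1 : ℝ) := by
          have := h0.1; ring_nf at this ⊢; linarith
        have h2 : A1 * ((m j).2.2 : ℝ) = (sg ε * A2) * ((m i).2.2 : ℝ) := by
          have := h0.2; ring_nf at this ⊢; linarith
        by_cases hm2 : (m j).2 = (m i).2
        · -- cancel: A1 = sg ε * A2, contradicting the u-condition
          have hmnz := prim_ne_zero (hm j).2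
          have hcc : A1 = sg ε * A2 := by
            rw [hm2] at h1 h2
            by_cases hz1 : ((m i).2.1 : ℝ) = 0
            · have hz2 : ((m i).2.2 : ℝ) ≠ 0 := by
                rw [hm2] at hmnz
                intro hz2
                exact hmnz ⟨by exact_mod_cast hz1, by exact_mod_cast hz2⟩
              exact mul_right_cancel₀ hz2 h2
            · exact mul_right_cancel₀ hz1 h1
          exact hucond i j ε hij hm2.symm (by rw [hA1, hA2] at hcc; linarith [hcc])
        · exact aux_indep (hm j).2 (hm i).2 hm2 hA1ne hA2ne ⟨h1, h2⟩
      · intro h0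
        rw [Prod.ext_iff] at h0
        simp at h0
  obtain ⟨v, hv⟩ := exists_generic nv hnv
  refine ⟨u, v, heu, fun i => hv (Sum.inl i), ?_⟩
  intro i j hij σ hσ heq
  have hε : ∃ ε : Bool, sg ε = σ := by
    rcases hσ with rfl | rfl
    · exact ⟨true, by simp [sg]⟩
    · exact ⟨false, by simp [sg]⟩
  obtain ⟨ε, rfl⟩ := hε
  apply hv (Sum.inr (i, j, ε))
  have hval : euclInner (nv (Sum.inr (i, j, ε))) v =
      ((((p i).1 : ℝ) * ((p j).2 : ℝ)) * euclInner (uvec (m i).1) u)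
          * euclInner (uvec (m j).2) v
        - sg ε * (((((p j).1 : ℝ) * ((p i).2 : ℝ)) * euclInner (uvec (m j).1) u)
          * euclInner (uvec (m i).2) v) := by
    simp only [nv, Sum.elim_inr, gv, if_pos hij]
    simp only [euclInner, uvec]
    ring
  rw [hval]
  linear_combination heq


theorem stmt15 (C : Set (ℝ × ℝ)) (hcpt : IsCompact C) (hsymm : C = -C)
    (hconv : StrictConvex ℝ C) (hint : (interior C).Nonempty)
    (P : ℝ × ℝ → ℝ)
    (hP : ∀ t : ℝ × ℝ, P t = sSup ((fun x => euclInner t x) '' C))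
    (hPa : AnalyticOnNhd ℝ P {t : ℝ × ℝ | t ≠ 0})
    (K : ℕ) (p : Fin K → ℤ × ℤ) (m : Fin K → (ℤ × ℤ) × (ℤ × ℤ))
    (hp : ∀ i, IsPrimitivePos (p i) ∧ 1 ≤ (p i).1 ∧ 1 ≤ (p i).2)
    (hm : ∀ i, IsPrimitivePos (m i).1 ∧ IsPrimitivePos (m i).2)
    (hdist : Function.Injective (fun i => (p i, m i)))
    (l : Fin K → ℝ)
    (hl : ∀ z₁ z₂ : ℝ × ℝ, ∑ i, l i * Qfun P (p i) (m i) z₁ z₂ = 0) :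
    ∀ i, l i = 0 := by
  classical
  obtain ⟨z₀, hz₀⟩ := hint
  have hCne : C.Nonempty := ⟨z₀, interior_subset hz₀⟩
  obtain ⟨ε, hε, hball⟩ := ball_in_C hconv hsymm ⟨z₀, hz₀⟩
  have hgreat := P_isGreatest hcpt hCne hP
  have heven : ∀ a b : ℝ, P (-a, -b) = P (a, b) := P_even hcpt hCne hsymm hP
  have hhom : ∀ {c : ℝ}, 0 < c → ∀ a b : ℝ, P (c * a, c * b) = c * P (a, b) :=
    fun hc a b => P_homog hcpt hCne hP hc a b
  -- positivity of P (0,1)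
  have hP01 : 0 < P (0, 1) := by
    have hmem : ((0:ℝ), ε/2) ∈ C := by
      apply hball
      have : ‖((0:ℝ), ε/2)‖ = max ‖(0:ℝ)‖ ‖ε/2‖ := rfl
      rw [this]
      simp only [norm_zero, Real.norm_eq_abs, abs_of_pos (by linarith : (0:ℝ) < ε/2)]
      rw [max_eq_right (by linarith)]
      linarith
    have hle : euclInner (0,1) ((0:ℝ), ε/2) ≤ P (0, 1) :=
      (hgreat (0,1)).2 ⟨_, hmem, rfl⟩
    simp only [euclInner] at hle
    norm_num at hle
    linarith
  -- the one-variable profile functions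
  set φ : ℝ → ℝ := fun x => P (x, 1) + P (-x, 1) with hφdef
  set ψ : ℝ → ℝ := fun y => P (1, y) + P (-1, y) with hψdef
  have hψa : ∀ y : ℝ, AnalyticAt ℝ ψ y := by
    intro y
    rw [hψdef]
    have h1 : ((1:ℝ), y) ∈ {t : ℝ × ℝ | t ≠ 0} :=
      fun h => one_ne_zero (congrArg Prod.fst h)
    have h2 : ((-1:ℝ), y) ∈ {t : ℝ × ℝ | t ≠ 0} := by
      intro h
      have := congrArg Prod.fst h
      norm_num at this
    exact ((hPa _ h1).comp₂ analyticAt_const analyticAt_id).add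
      ((hPa _ h2).comp₂ analyticAt_const analyticAt_id)
  have hφa : ∀ x : ℝ, AnalyticAt ℝ φ x := by
    intro x
    rw [hφdef]
    have h1 : ((x:ℝ), (1:ℝ)) ∈ {t : ℝ × ℝ | t ≠ 0} := by
      intro h
      have := congrArg Prod.snd h
      norm_num at this
    have h2 : ((-x:ℝ), (1:ℝ)) ∈ {t : ℝ × ℝ | t ≠ 0} := by
      intro h
      have := congrArg Prod.snd h
      norm_num at this
    exact ((hPa _ h1).comp₂ analyticAt_id analyticAt_const).add
      ((hPa _ h2).comp₂ analyticAt_id.neg analyticAt_const)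
  have hψeven : ∀ y, ψ (-y) = ψ y := by
    intro y
    simp only [hψdef]
    have e1 : P (1, -y) = P (-1, y) := by
      have h := heven (-1) y
      norm_num at h
      linarith [h]
    have e2 : P (-1, -y) = P (1, y) := by
      have := heven 1 y
      exact this
    rw [e1, e2, add_comm]
  have hφψ : ∀ x : ℝ, 0 < x → φ x = x * ψ (1/x) := by
    intro x hx
    simp only [hφdef, hψdef]
    have e1 : P (x, 1) = x * P (1, 1/x) := by
      have := hhom hx 1 (1/x)
      rw [mul_one, mul_one_div, div_self (ne_of_gt hx)] at this
      exact this
    have e2 : P (-x, 1) = x * P (-1, 1/x) := by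
      have := hhom hx (-1) (1/x)
      rw [mul_one_div, div_self (ne_of_gt hx)] at this
      rw [show x * (-1) = -x by ring] at this
      exact this
    rw [e1, e2, mul_add]
  have hφ0 : 0 < φ 0 := by
    simp only [hφdef, neg_zero]
    linarith [hP01, hP01]
  have hinf := psi_derivs_infinite ψ φ hψa hφa hψeven hφψ hφ0
  -- choose generic u, v
  obtain ⟨u, v, hu, hv, huv⟩ := exists_uv p m hp hm hdist
  have hppos : ∀ i : Fin K, (0:ℝ) < ((p i).1 : ℝ) ∧ (0:ℝ) < ((p i).2 : ℝ) := by
    intro i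
    constructor
    · exact_mod_cast lt_of_lt_of_le zero_lt_one (hp i).2.1
    · exact_mod_cast lt_of_lt_of_le zero_lt_one (hp i).2.2
  set α : Fin K → ℝ := fun i => ((p i).1 : ℝ) * euclInner (uvec (m i).1) u with hαdef
  set β : Fin K → ℝ := fun i => ((p i).2 : ℝ) * euclInner (uvec (m i).2) v with hβdef
  have hα : ∀ i, α i ≠ 0 := by
    intro i
    simp only [hαdef]
    exact mul_ne_zero (ne_of_gt (hppos i).1) (hu i)
  have hβ : ∀ i, β i ≠ 0 := by
    intro i
    simp only [hβdef]
    exact mul_ne_zero (ne_of_gt (hppos i).2) (hv i)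
  set r : Fin K → ℝ := fun i => |α i| / |β i| with hrdef
  have hrpos : ∀ i, 0 < r i := by
    intro i
    simp only [hrdef]
    exact div_pos (abs_pos.mpr (hα i)) (abs_pos.mpr (hβ i))
  have hrinj : Function.Injective r := by
    intro i j hrij
    by_contra hij
    simp only [hrdef] at hrij
    have h1 : |α i| * |β j| = |α j| * |β i| :=
      (div_eq_div_iff (abs_pos.mpr (hβ i)).ne' (abs_pos.mpr (hβ j)).ne').mp hrij
    rw [← abs_mul, ← abs_mul] at h1
    rcases abs_eq_abs.mp h1 with h | h
    · refine huv i j hij 1 (Or.inl rfl) ?_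
      rw [one_mul]
      simp only [hαdef, hβdef] at h
      exact h
    · refine huv i j hij (-1) (Or.inr rfl) ?_
      simp only [hαdef, hβdef] at h
      rw [h]
      ring
  -- the basic relation from hl
  have hQ : ∀ (i : Fin K) (x : ℝ),
      Qfun P (p i) (m i) (x * u.1, x * u.2) v = P (α i * x, β i) := by
    intro i x
    unfold Qfun
    congr 1
    rw [Prod.mk.injEq]
    constructor
    · simp only [hαdef, euclInner, uvec]
      ring
    · simp only [hβdef, euclInner, uvec]
  have hrel1 : ∀ x : ℝ, ∑ i, l i * P (α i * x, β i) = 0 := by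
    intro x
    rw [← hl (x * u.1, x * u.2) v]
    exact Finset.sum_congr rfl fun i _ => by rw [hQ i x]
  -- fold the two signs into φ
  have hfold : ∀ (i : Fin K) (x : ℝ),
      P (α i * x, β i) + P (α i * -x, β i) = |β i| * φ (r i * x) := by
    intro i x
    have hBpos : 0 < |β i| := abs_pos.mpr (hβ i)
    have key : P (|α i| * x, |β i|) + P (-(|α i| * x), |β i|) = |β i| * φ (r i * x) := by
      have e1 : P (|β i| * (r i * x), |β i| * 1) = |β i| * P (r i * x, 1) :=
        hhom hBpos (r i * x) 1
      have e2 : P (|β i| * (-(r i * x)), |β i| * 1) = |β i| * P (-(r i * x), 1) :=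
        hhom hBpos (-(r i * x)) 1
      have hb1 : |β i| * (r i * x) = |α i| * x := by
        simp only [hrdef]
        field_simp
      have hb2 : |β i| * (-(r i * x)) = -(|α i| * x) := by
        rw [← hb1]; ring
      rw [hb1, mul_one] at e1
      rw [hb2, mul_one] at e2
      rw [e1, e2]
      simp only [hφdef]
      ring
    have step1 : P (α i * x, β i) + P (α i * -x, β i)
        = P (|α i| * x, β i) + P (-(|α i| * x), β i) := by
      rcases abs_cases (α i) with ⟨hA, _⟩ | ⟨hA, _⟩
      · rw [hA, show α i * -x = -(α i * x) from by ring]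
      · rw [hA, show -(-α i * x) = α i * x from by ring,
          show -α i * x = α i * -x from by ring]
        exact add_comm _ _
    have step2 : P (|α i| * x, β i) + P (-(|α i| * x), β i)
        = P (|α i| * x, |β i|) + P (-(|α i| * x), |β i|) := by
      rcases abs_cases (β i) with ⟨hB, _⟩ | ⟨hB, _⟩
      · rw [hB]
      · have f1 : P (|α i| * x, |β i|) = P (-(|α i| * x), β i) := by
          rw [hB]
          have := heven (-(|α i| * x)) (β i)
          rw [neg_neg] at this
          exact this
        have f2 : P (-(|α i| * x), |β i|) = P (|α i| * x, β i) := by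
          rw [hB]
          exact heven (|α i| * x) (β i)
        rw [f1, f2]
        exact add_comm _ _
    rw [step1, step2, key]
  have hrelφ : ∀ x : ℝ, ∑ i, (l i * |β i|) * φ (r i * x) = 0 := by
    intro x
    have h1 := hrel1 x
    have h2 := hrel1 (-x)
    calc ∑ i, (l i * |β i|) * φ (r i * x)
        = ∑ i, (l i * P (α i * x, β i) + l i * P (α i * -x, β i)) := by
          refine Finset.sum_congr rfl fun i _ => ?_
          rw [show (l i * |β i|) * φ (r i * x) = l i * (|β i| * φ (r i * x)) by ring,
            ← hfold i x]
          ring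
      _ = (∑ i, l i * P (α i * x, β i)) + ∑ i, l i * P (α i * -x, β i) :=
          Finset.sum_add_distrib
      _ = 0 := by rw [h1, h2, add_zero]
  -- convert to the ψ-relation
  set ρ : Fin K → ℝ := fun i => (r i)⁻¹ with hρdef
  set dd : Fin K → ℝ := fun i => l i * |β i| * r i with hdddef
  have hρpos : ∀ i, 0 < ρ i := fun i => by
    simp only [hρdef]; exact inv_pos.mpr (hrpos i)
  have hρinj : Function.Injective ρ := by
    intro i j h
    simp only [hρdef] at h
    exact hrinj (inv_injective h)
  have hψrel : ∀ y : ℝ, 0 < y → ∑ i, dd i * ψ (ρ i * y) = 0 := by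
    intro y hy
    have hx : 0 < 1/y := by positivity
    have h1 := hrelφ (1/y)
    have hterm : ∀ i : Fin K, (l i * |β i|) * φ (r i * (1/y))
        = (1/y) * (dd i * ψ (ρ i * y)) := by
      intro i
      have hrx : 0 < r i * (1/y) := mul_pos (hrpos i) hx
      rw [hφψ _ hrx]
      have harg : 1/(r i * (1/y)) = ρ i * y := by
        simp only [hρdef]
        field_simp
      rw [harg]
      simp only [hdddef]
      ring
    rw [Finset.sum_congr rfl fun i _ => hterm i, ← Finset.mul_sum] at h1
    rcases mul_eq_zero.mp h1 with h | h
    · exact absurd h (by positivity)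
    · exact h
  have hdd := dilates_indep ψ hψa hinf ρ dd hρpos hρinj hψrel
  intro i
  have := hdd i
  simp only [hdddef] at this
  have hne : |β i| * r i ≠ 0 := ne_of_gt (mul_pos (abs_pos.mpr (hβ i)) (hrpos i))
  have : l i * (|β i| * r i) = 0 := by linarith [this]
  exact (mul_eq_zero.mp this).resolve_right hne
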